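/- Sequential scalar updates equal the batch update: if P ≻ 0 and the measurement noise covariance R = diag(r_1,...,r_m) with each r_i > 0, then applying the Kalman covariance update one scalar measurement row at a time (P ← P - P h_iᵀ (h_i P h_iᵀ + r_i)^{-1} h_i P for i = 1,...,m) yields the same final covariance as the batch update P - PHᵀ(HPHᵀ + R)^{-1}HP, where h_i is the i-th row of H. -/

import Mathlib

open Matrix

section Aux
variable {n : ℕ}

private lemma vmv_posSemidef (h : Fin n → ℝ) : (vecMulVec h h).PosSemidef := by
  refine PosSemidef.of_dotProduct_mulVec_nonneg ?_ ?_
  · ext i j; simp [vecMulVec_apply, IsHermitian, conjTranspose_apply, mul_comm]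
  · intro x
    have h1 : (vecMulVec h h).mulVec x = (h ⬝ᵥ x) • h := by
      ext i
      simp [mulVec, vecMulVec_apply, dotProduct, Finset.mul_sum, mul_assoc,
        Finset.sum_mul, mul_comm, mul_left_comm]
    rw [h1]
    simp only [dotProduct_smul, smul_eq_mul]
    have h2 : star x ⬝ᵥ h = h ⬝ᵥ x := by simp [dotProduct, mul_comm]
    rw [h2]
    exact mul_self_nonneg _

private lemma mul_vmv (Q : Matrix (Fin n) (Fin n) ℝ) (a b : Fin n → ℝ) :
    Q * vecMulVec a b = vecMulVec (Q.mulVec a) b := by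
  ext i j
  simp [mul_apply, vecMulVec_apply, mulVec, dotProduct, Finset.sum_mul, mul_assoc]

private lemma vmv_mul (Q : Matrix (Fin n) (Fin n) ℝ) (a b : Fin n → ℝ) :
    vecMulVec a b * Q = vecMulVec a (b ᵥ* Q) := by
  ext i j
  simp [mul_apply, vecMulVec_apply, vecMul, dotProduct, Finset.mul_sum, mul_assoc]

private lemma A_posDef (Q : Matrix (Fin n) (Fin n) ℝ) (hQ : Q.PosDef)
    (h : Fin n → ℝ) (c : ℝ) (hc : 0 < c) :
    (Q⁻¹ + c⁻¹ • vecMulVec h h).PosDef :=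
  hQ.inv.add_posSemidef <| by
    have hp := vmv_posSemidef h
    refine PosSemidef.of_dotProduct_mulVec_nonneg ?_ fun x => ?_
    · show _ᴴ = _
      rw [conjTranspose_smul, hp.1.eq, star_trivial]
    · rw [smul_mulVec, dotProduct_smul]
      exact smul_nonneg (by positivity) (hp.dotProduct_mulVec_nonneg x)

/-- The key rank-one Woodbury step. -/
private lemma step_eq (Q : Matrix (Fin n) (Fin n) ℝ) (hQ : Q.PosDef)
    (h : Fin n → ℝ) (c : ℝ) (hc : 0 < c) :
    Q - (h ⬝ᵥ Q.mulVec h + c)⁻¹ • vecMulVec (Q.mulVec h) (h ᵥ* Q)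
      = (Q⁻¹ + c⁻¹ • vecMulVec h h)⁻¹ := by
  have hA : (Q⁻¹ + c⁻¹ • vecMulVec h h).PosDef := A_posDef Q hQ h c hc
  set u : Matrix (Fin n) (Fin n) ℝ := vecMulVec h h with hu
  set q : ℝ := h ⬝ᵥ Q.mulVec h with hq
  have hq0 : 0 ≤ q := by
    rcases eq_or_ne h 0 with rfl | hne
    · simp [hq]
    · have := (hQ.dotProduct_mulVec_pos (by simpa using hne)).le
      simpa [hq, dotProduct, mul_comm] using this
  have hs : q + c ≠ 0 := by positivity
  -- identify vecMulVec (Q *ᵥ h) (h ᵥ* Q) with Q * u * Q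
  have hQuQ : vecMulVec (Q.mulVec h) (h ᵥ* Q) = Q * u * Q := by
    rw [hu, mul_vmv, vmv_mul]
  have huQu : u * Q * u = q • u := by
    have hq' : q = (h ᵥ* Q) ⬝ᵥ h := by rw [hq, dotProduct_mulVec]
    rw [hu, vmv_mul, mul_vmv]
    ext i j
    simp only [vecMulVec_apply, Matrix.smul_apply, smul_eq_mul, hq', mulVec, dotProduct,
      Finset.sum_mul]
    exact Finset.sum_congr rfl fun k _ => by ring
  haveI := hQ.isUnit.invertible
  refine (Matrix.inv_eq_right_inv ?_).symm
  rw [hQuQ, Matrix.mul_assoc Q u Q]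
  have h2 : u * (Q * (u * Q)) = q • (u * Q) := by
    rw [← Matrix.mul_assoc, ← Matrix.mul_assoc, huQu, Matrix.smul_mul]
  simp only [Matrix.mul_sub, Matrix.add_mul, Matrix.mul_smul, Matrix.smul_mul, smul_smul,
    Matrix.inv_mul_cancel_left_of_invertible, Matrix.inv_mul_of_invertible, h2]
  match_scalars
  · ring
  · field_simp
    ring

private lemma foldl_lemma {m : ℕ} (H : Matrix (Fin m) (Fin n) ℝ) (r : Fin m → ℝ)
    (hr : ∀ i, 0 < r i) :
    ∀ (l : List (Fin m)) (Q : Matrix (Fin n) (Fin n) ℝ), Q.PosDef →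
      l.foldl (fun Q i => Q - (H i ⬝ᵥ Q.mulVec (H i) + r i)⁻¹ •
          vecMulVec (Q.mulVec (H i)) (H i ᵥ* Q)) Q
        = (Q⁻¹ + (l.map fun i => (r i)⁻¹ • vecMulVec (H i) (H i)).sum)⁻¹
  | [], Q, hQ => by
      haveI := hQ.isUnit.invertible
      simp [Matrix.inv_inv_of_invertible]
  | i :: l, Q, hQ => by
      have hA := A_posDef Q hQ (H i) (r i) (hr i)
      haveI := hA.isUnit.invertible
      simp only [List.foldl_cons, List.map_cons, List.sum_cons]
      rw [step_eq Q hQ (H i) (r i) (hr i), foldl_lemma H r hr l _ hA.inv,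
        Matrix.inv_inv_of_invertible, add_assoc]
end Aux

open Matrix

/-- with diagonal measurement noise, applying the Kalman covariance update
one scalar measurement row at a time gives the same result as the batch update. -/
theorem sequential_scalar_updates_eq_batch {n m : ℕ}
    (P : Matrix (Fin n) (Fin n) ℝ) (hP : P.PosDef)
    (H : Matrix (Fin m) (Fin n) ℝ) (r : Fin m → ℝ) (hr : ∀ i, 0 < r i) :
    (List.finRange m).foldl
        (fun Q i =>
          Q - (H i ⬝ᵥ Q.mulVec (H i) + r i)⁻¹ •
            Matrix.vecMulVec (Q.mulVec (H i)) (H i ᵥ* Q))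
        P
      = P - P * Hᵀ * (H * P * Hᵀ + Matrix.diagonal r)⁻¹ * H * P := by
  rw [foldl_lemma H r hr (List.finRange m) P hP]
  have hsum : ((List.finRange m).map fun i => (r i)⁻¹ • vecMulVec (H i) (H i)).sum
      = Hᵀ * (diagonal r)⁻¹ * H := by
    have hRinv : (diagonal r)⁻¹ = diagonal (fun i => (r i)⁻¹) := by
      apply Matrix.inv_eq_right_inv
      rw [diagonal_mul_diagonal,
        show (fun i => r i * (r i)⁻¹) = fun _ => (1 : ℝ) from
          funext fun i => mul_inv_cancel₀ (hr i).ne', diagonal_one]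
    rw [← Fin.sum_univ_def, hRinv]
    ext a b
    simp only [Matrix.sum_apply, Matrix.smul_apply, vecMulVec_apply, smul_eq_mul, mul_apply,
      transpose_apply]
    refine Finset.sum_congr rfl fun k _ => ?_
    rw [Finset.sum_eq_single k (fun x _ hx => by simp [Matrix.diagonal_apply_ne _ hx])
      (by simp)]
    simp only [diagonal_apply_eq]
    ring
  rw [hsum]
  have hR : (diagonal r).PosDef := posDef_diagonal_iff.mpr hr
  haveI := hP.isUnit.invertible
  haveI := hR.isUnit.invertible
  have hSpd : (diagonal r + H * P * Hᵀ).PosDef := by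
    have h1 : (H * P * Hᵀ).PosSemidef := by
      have := hP.posSemidef.mul_mul_conjTranspose_same H
      simpa [conjTranspose_eq_transpose_of_trivial] using this
    exact hR.add_posSemidef h1
  have hw := Matrix.add_mul_mul_inv_eq_sub P⁻¹ Hᵀ (diagonal r)⁻¹ H
    hP.inv.isUnit hR.inv.isUnit ?_
  · rw [Matrix.inv_inv_of_invertible, Matrix.inv_inv_of_invertible] at hw
    rw [hw, add_comm (H * P * Hᵀ) (diagonal r)]
  · rw [Matrix.inv_inv_of_invertible, Matrix.inv_inv_of_invertible]
    exact hSpd.isUnit
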